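/- arXiv:2403.03530 — 2 statements merged into one kernel-verified Lean document; each statement's English description precedes it below -/
import Mathlib

section
/- Let g : {0,1}^w → {0,1} with p = wt(g)/2^w and d = min_{y} C_y(g), and define f : {0,1}^{hw} → {0,1} by f(x^{(1)},…,x^{(h)}) = g(x^{(1)}) ∨ ⋯ ∨ g(x^{(h)}) on disjoint blocks. Then D_ave(f) ≥ h·d·(1−p)^h, and D_ave(f) ≤ h·D_ave(g). -/
/-- Decision trees over `n` boolean variables. -/
inductive DTree (n : ℕ) : Type where
  | leaf : Bool → DTree n
  | node : Fin n → DTree n → DTree n → DTree n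

namespace DTree

/-- Evaluate a decision tree on an input. -/
def eval {n : ℕ} : DTree n → (Fin n → Bool) → Bool
  | leaf b, _ => b
  | node i t0 t1, x => if x i then eval t1 x else eval t0 x

/-- Number of queries made on input `x`. -/
def cost {n : ℕ} : DTree n → (Fin n → Bool) → ℕ
  | leaf _, _ => 0
  | node i t0 t1, x => 1 + (if x i then cost t1 x else cost t0 x)

/-- Depth of a decision tree. -/
def depth {n : ℕ} : DTree n → ℕ
  | leaf _ => 0
  | node _ t0 t1 => 1 + max (depth t0) (depth t1)

end DTree

/-- `T` computes `f` with zero error. -/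
def Computes {n : ℕ} (T : DTree n) (f : (Fin n → Bool) → Bool) : Prop :=
  ∀ x, T.eval x = f x

/-- Average cost of a decision tree under the uniform distribution. -/
noncomputable def avgCost {n : ℕ} (T : DTree n) : ℝ :=
  (∑ x : Fin n → Bool, (T.cost x : ℝ)) / 2 ^ n

/-- Average-case deterministic query complexity under the uniform distribution. -/
noncomputable def Dave {n : ℕ} (f : (Fin n → Bool) → Bool) : ℝ :=
  sInf {c : ℝ | ∃ T : DTree n, Computes T f ∧ avgCost T = c}

/-- Worst-case deterministic query complexity. -/
noncomputable def Dworst {n : ℕ} (f : (Fin n → Bool) → Bool) : ℕ :=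
  sInf {d : ℕ | ∃ T : DTree n, Computes T f ∧ T.depth = d}

/-- The weight of a boolean function: the number of inputs mapped to `true`. -/
def wt {n : ℕ} (f : (Fin n → Bool) → Bool) : ℕ :=
  (Finset.univ.filter fun x : Fin n → Bool => f x = true).card

/-- `S` is a certificate of `f` on input `x`. -/
def IsCert {n : ℕ} (f : (Fin n → Bool) → Bool) (x : Fin n → Bool) (S : Finset (Fin n)) : Prop :=
  ∀ y : Fin n → Bool, (∀ i ∈ S, y i = x i) → f y = f x

/-- Certificate complexity of `f` on input `x`. -/
noncomputable def certC {n : ℕ} (f : (Fin n → Bool) → Bool) (x : Fin n → Bool) : ℕ :=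
  sInf {k : ℕ | ∃ S : Finset (Fin n), IsCert f x S ∧ S.card = k}

/-- The weight of the subfunction `f|ρ`, where `ρ : Fin n → Option Bool` is a restriction:
the number of inputs consistent with `ρ` on which `f` outputs `true`. -/
def wtR {n : ℕ} (f : (Fin n → Bool) → Bool) (ρ : Fin n → Option Bool) : ℕ :=
  (Finset.univ.filter fun x : Fin n → Bool =>
    f x = true ∧ ∀ i : Fin n, ∀ b : Bool, ρ i = some b → x i = b).card

/-- Number of coordinates fixed by a restriction. -/
def suppCard {n : ℕ} (ρ : Fin n → Option Bool) : ℕ :=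
  (Finset.univ.filter fun i : Fin n => (ρ i).isSome).card

/-- The restriction given by the first `j` steps of a decision-tree path `L`. -/
def PathRho {n : ℕ} (L : List (Fin n × Bool)) (j : ℕ) : Fin n → Option Bool :=
  fun i => (L.take j).lookup i

/-- The path `L` is `δ`-parity with respect to `f`. -/
def DeltaParityPath {n : ℕ} (f : (Fin n → Bool) → Bool) (δ : ℝ)
    (L : List (Fin n × Bool)) : Prop :=
  ∀ j : ℕ, 1 ≤ j → j ≤ L.length →
    (1/2) * (1 - δ) * (wtR f (PathRho L (j-1)) : ℝ) ≤ (wtR f (PathRho L j) : ℝ) ∧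
    (wtR f (PathRho L j) : ℝ) ≤ (1/2) * (1 + δ) * (wtR f (PathRho L (j-1)) : ℝ)

/-- `f` is a `(t,δ)`-parity function: every path of length at most `t` is δ-parity. -/
def ParityFun {n : ℕ} (f : (Fin n → Bool) → Bool) (t : ℕ) (δ : ℝ) : Prop :=
  ∀ L : List (Fin n × Bool), (L.map Prod.fst).Nodup → L.length ≤ t → DeltaParityPath f δ L

/-- The subfunction `f|ρ`, viewed as a function on the full cube. -/
def restrictFun {n : ℕ} (f : (Fin n → Bool) → Bool) (ρ : Fin n → Option Bool) :
    (Fin n → Bool) → Bool :=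
  fun x => f fun i => (ρ i).getD (x i)

/-- Probability mass of the restriction `ρ` under the `p`-random restriction `R_p`. -/
noncomputable def rpMass {n : ℕ} (p : ℝ) (ρ : Fin n → Option Bool) : ℝ :=
  ∏ i : Fin n, if (ρ i).isSome then (1 - p) / 2 else p

/-- `f` is `λ`-critical. -/
def IsCritical {n : ℕ} (lam : ℝ) (f : (Fin n → Bool) → Bool) : Prop :=
  ∀ p : ℝ, 0 ≤ p → p ≤ 1 → ∀ t : ℕ,
    (∑ ρ : Fin n → Option Bool,
      if t ≤ Dworst (restrictFun f ρ) then rpMass p ρ else 0) ≤ (p * lam) ^ t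

/-- The index of the `j`-th variable of the `k`-th block. -/
def blockIdx (h w : ℕ) (k : Fin h) (j : Fin w) : Fin (h * w) :=
  ⟨k.val * w + j.val, by
    have hk := k.isLt
    have hj := j.isLt
    calc k.val * w + j.val < k.val * w + w := by omega
      _ = (k.val + 1) * w := by ring
      _ ≤ h * w := Nat.mul_le_mul_right w hk⟩

namespace DTree

def queries {n : ℕ} : DTree n → (Fin n → Bool) → Finset (Fin n)
  | leaf _, _ => ∅
  | node i t0 t1, x => insert i (if x i then queries t1 x else queries t0 x)

lemma card_queries_le_cost {n : ℕ} (T : DTree n) (x : Fin n → Bool) :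
    (T.queries x).card ≤ T.cost x := by
  induction T with
  | leaf b => simp [queries, cost]
  | node i t0 t1 ih0 ih1 =>
    simp only [queries, cost]
    cases hxi : x i <;>
      simp only [Bool.false_eq_true, if_false, if_true] <;>
      exact (Finset.card_insert_le _ _).trans (by omega)

lemma eval_agree {n : ℕ} (T : DTree n) (x y : Fin n → Bool)
    (hxy : ∀ i ∈ T.queries x, y i = x i) : T.eval y = T.eval x := by
  induction T with
  | leaf b => rfl
  | node i t0 t1 ih0 ih1 =>
    have hi : y i = x i := hxy i (by simp [queries])
    simp only [eval, hi]
    cases hxi : x i <;>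
      simp only [Bool.false_eq_true, if_false, if_true]
    · exact ih0 fun j hj => hxy j (by
        simp only [queries, hxi, Bool.false_eq_true, if_false]
        exact Finset.mem_insert_of_mem hj)
    · exact ih1 fun j hj => hxy j (by
        simp only [queries, hxi, if_true]
        exact Finset.mem_insert_of_mem hj)

def mkTree {n : ℕ} (f : (Fin n → Bool) → Bool) : List (Fin n) → (Fin n → Bool) → DTree n
  | [], σ => leaf (f σ)
  | i :: l, σ => node i (mkTree f l (Function.update σ i false))
      (mkTree f l (Function.update σ i true))

lemma eval_mkTree {n : ℕ} (f : (Fin n → Bool) → Bool) (l : List (Fin n))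
    (σ x : Fin n → Bool) :
    (mkTree f l σ).eval x = f (fun j => if j ∈ l then x j else σ j) := by
  induction l generalizing σ with
  | nil => simp [mkTree, eval]
  | cons i l ih =>
    simp only [mkTree, eval]
    cases hxi : x i <;>
      simp only [Bool.false_eq_true, if_false, if_true, ih] <;>
      (congr 1; funext j) <;> by_cases hj : j ∈ l
    · simp [hj, List.mem_cons]
    · by_cases hji : j = i
      · subst hji; simp [hj, hxi, Function.update_apply]
      · simp [hj, hji, Function.update_apply]
    · simp [hj, List.mem_cons]
    · by_cases hji : j = i
      · subst hji; simp [hj, hxi, Function.update_apply]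
      · simp [hj, hji, Function.update_apply]

end DTree

lemma exists_computes' {n : ℕ} (f : (Fin n → Bool) → Bool) :
    ∃ T : DTree n, (∀ x, T.eval x = f x) := by
  refine ⟨DTree.mkTree f (List.finRange n) (fun _ => false), fun x => ?_⟩
  rw [DTree.eval_mkTree]
  congr 1; funext j; simp [List.mem_finRange]

namespace DTree

def graft {n : ℕ} : DTree n → (Bool → DTree n) → DTree n
  | leaf b, c => c b
  | node i t0 t1, c => node i (graft t0 c) (graft t1 c)

lemma eval_graft {n : ℕ} (T : DTree n) (c : Bool → DTree n) (x : Fin n → Bool) :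
    (graft T c).eval x = (c (T.eval x)).eval x := by
  induction T with
  | leaf b => rfl
  | node i t0 t1 ih0 ih1 =>
    simp only [graft, eval]
    cases hxi : x i <;> simp [ih0, ih1]

lemma cost_graft {n : ℕ} (T : DTree n) (c : Bool → DTree n) (x : Fin n → Bool) :
    (graft T c).cost x = T.cost x + (c (T.eval x)).cost x := by
  induction T with
  | leaf b => simp [graft, cost, eval]
  | node i t0 t1 ih0 ih1 =>
    simp only [graft, cost, eval]
    cases hxi : x i <;> simp [ih0, ih1] <;> omega

def emap {n m : ℕ} (φ : Fin n → Fin m) : DTree n → DTree m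
  | leaf b => leaf b
  | node i t0 t1 => node (φ i) (emap φ t0) (emap φ t1)

lemma eval_emap {n m : ℕ} (φ : Fin n → Fin m) (T : DTree n) (x : Fin m → Bool) :
    (emap φ T).eval x = T.eval (fun j => x (φ j)) := by
  induction T with
  | leaf b => rfl
  | node i t0 t1 ih0 ih1 =>
    simp only [emap, eval]
    rw [ih0, ih1]

lemma cost_emap {n m : ℕ} (φ : Fin n → Fin m) (T : DTree n) (x : Fin m → Bool) :
    (emap φ T).cost x = T.cost (fun j => x (φ j)) := by
  induction T with
  | leaf b => rfl
  | node i t0 t1 ih0 ih1 =>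
    simp only [emap, cost]
    rw [ih0, ih1]

end DTree

lemma blockIdx_eq (h w : ℕ) (k : Fin h) (j : Fin w) :
    blockIdx h w k j = finProdFinEquiv (k, j) := by
  apply Fin.ext
  show k.val * w + j.val = _
  have hv : ((finProdFinEquiv (k, j) : Fin (h * w)) : ℕ) = j.val + w * k.val := rfl
  rw [hv, Nat.mul_comm, Nat.add_comm]

lemma blockIdx_injective (h w : ℕ) (k : Fin h) :
    Function.Injective (blockIdx h w k) := by
  intro j j' he
  have hv : k.val * w + j.val = k.val * w + j'.val := congrArg Fin.val he
  exact Fin.ext (Nat.add_left_cancel hv)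

lemma blockIdx_fst {h w : ℕ} {k k' : Fin h} {j j' : Fin w}
    (he : blockIdx h w k j = blockIdx h w k' j') : k = k' := by
  have hv : k.val * w + j.val = k'.val * w + j'.val := congrArg Fin.val he
  have hj := j.isLt
  have hj' := j'.isLt
  rcases lt_trichotomy k.val k'.val with hlt | heq | hgt
  · exfalso
    have h2 : k.val * w + w ≤ k'.val * w := by
      calc k.val * w + w = (k.val + 1) * w := by ring
        _ ≤ k'.val * w := Nat.mul_le_mul_right _ hlt
    linarith
  · exact Fin.ext heq
  · exfalso
    have h2 : k'.val * w + w ≤ k.val * w := by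
      calc k'.val * w + w = (k'.val + 1) * w := by ring
        _ ≤ k.val * w := Nat.mul_le_mul_right _ hgt
    linarith

def blockEquiv (h w : ℕ) : (Fin (h * w) → Bool) ≃ (Fin h → Fin w → Bool) :=
  (Equiv.arrowCongr finProdFinEquiv.symm (Equiv.refl Bool)).trans
    (Equiv.curry _ _ _)

lemma blockEquiv_apply (h w : ℕ) (x : Fin (h * w) → Bool) (k : Fin h) :
    blockEquiv h w x k = fun j => x (blockIdx h w k j) := by
  funext j
  show x (finProdFinEquiv.symm.symm (k, j)) = _
  rw [Equiv.symm_symm, ← blockIdx_eq]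

lemma sum_block_div {h w : ℕ} (k : Fin h) (F : (Fin w → Bool) → ℝ) :
    (∑ x : Fin (h * w) → Bool, F (fun j => x (blockIdx h w k j))) / 2 ^ (h * w)
      = (∑ y : Fin w → Bool, F y) / 2 ^ w := by
  classical
  set Φ := (blockEquiv h w).trans (Equiv.funSplitAt k (Fin w → Bool)) with hΦ
  have h1 : ∀ x, (Φ x).1 = fun j => x (blockIdx h w k j) := by
    intro x
    have : (Φ x).1 = blockEquiv h w x k := rfl
    rw [this, blockEquiv_apply]
  have h2 : ∑ x : Fin (h * w) → Bool, F (fun j => x (blockIdx h w k j))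
      = ∑ z : (Fin w → Bool) × ({ j // j ≠ k } → Fin w → Bool), F z.1 := by
    rw [← Equiv.sum_comp Φ (fun z => F z.1)]
    exact Finset.sum_congr rfl fun x _ => by rw [h1]
  have h3 : ∑ z : (Fin w → Bool) × ({ j // j ≠ k } → Fin w → Bool), F z.1
      = (Fintype.card ({ j // j ≠ k } → Fin w → Bool) : ℝ) * ∑ y, F y := by
    rw [Fintype.sum_prod_type]
    simp only [Finset.sum_const, Finset.card_univ, nsmul_eq_mul]
    rw [Finset.mul_sum]
  have hc : (2 : ℕ) ^ (h * w)
      = 2 ^ w * Fintype.card ({ j // j ≠ k } → Fin w → Bool) := by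
    have hcc := Fintype.card_congr Φ
    simpa [Fintype.card_fun] using hcc
  have hc0 : (0 : ℝ) < (Fintype.card ({ j // j ≠ k } → Fin w → Bool) : ℝ) := by
    exact_mod_cast Fintype.card_pos
  rw [h2, h3]
  have hcr : (2 : ℝ) ^ (h * w)
      = 2 ^ w * (Fintype.card ({ j // j ≠ k } → Fin w → Bool) : ℝ) := by
    exact_mod_cast congrArg (Nat.cast : ℕ → ℝ) hc
  rw [hcr]
  rw [mul_comm ((Fintype.card ({ j // j ≠ k } → Fin w → Bool) : ℝ)) (∑ y, F y),
    mul_comm ((2:ℝ) ^ w) ((Fintype.card ({ j // j ≠ k } → Fin w → Bool) : ℝ))]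
  rw [mul_comm ((Fintype.card ({ j // j ≠ k } → Fin w → Bool) : ℝ)) ((2:ℝ) ^ w)]
  exact mul_div_mul_right _ _ (ne_of_gt hc0)

lemma card_allfalse (h w : ℕ) (g : (Fin w → Bool) → Bool) :
    Fintype.card {x : Fin (h * w) → Bool //
        ∀ k : Fin h, g (fun j => x (blockIdx h w k j)) = false}
      = (2 ^ w - wt g) ^ h := by
  classical
  have e1 : {x : Fin (h * w) → Bool //
        ∀ k : Fin h, g (fun j => x (blockIdx h w k j)) = false}
      ≃ {G : Fin h → Fin w → Bool // ∀ k, g (G k) = false} := by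
    refine (blockEquiv h w).subtypeEquiv ?_
    intro x
    constructor
    · intro hx k; rw [blockEquiv_apply]; exact hx k
    · intro hx k; have := hx k; rwa [blockEquiv_apply] at this
  have e2 : {G : Fin h → Fin w → Bool // ∀ k, g (G k) = false}
      ≃ (Fin h → {y : Fin w → Bool // g y = false}) :=
    Equiv.subtypePiEquivPi (p := fun (_ : Fin h) (y : Fin w → Bool) => g y = false)
  rw [Fintype.card_congr (e1.trans e2), Fintype.card_fun, Fintype.card_fin]
  congr 1
  rw [Fintype.card_subtype]
  have hsplit := Finset.card_filter_add_card_filter_not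
    (s := (Finset.univ : Finset (Fin w → Bool)))
    (p := fun y : Fin w → Bool => g y = true)
  have hfe : (Finset.univ.filter fun y : Fin w → Bool => g y = false)
      = Finset.univ.filter fun y : Fin w → Bool => ¬ (g y = true) := by
    apply Finset.filter_congr
    intro y _
    simp
  have hcard_univ : (Finset.univ : Finset (Fin w → Bool)).card = 2 ^ w := by
    simp [Finset.card_univ]
  rw [hfe]
  unfold wt
  omega

namespace DTree

def orTree {h w : ℕ} (Tg : DTree w) : List (Fin h) → DTree (h * w)
  | [] => leaf false
  | k :: ks => graft (emap (blockIdx h w k) Tg)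
      (fun b => if b then leaf true else orTree Tg ks)

lemma eval_orTree {h w : ℕ} (g : (Fin w → Bool) → Bool) (Tg : DTree w)
    (hTg : ∀ y, Tg.eval y = g y) (ks : List (Fin h)) (x : Fin (h * w) → Bool) :
    (orTree Tg ks).eval x
      = decide (∃ k ∈ ks, g (fun j => x (blockIdx h w k j)) = true) := by
  induction ks with
  | nil => simp [orTree, eval]
  | cons k ks ih =>
    show (graft (emap (blockIdx h w k) Tg) _).eval x = _
    rw [eval_graft, eval_emap, hTg]
    cases hg : g (fun j => x (blockIdx h w k j))
    · simp only [Bool.false_eq_true, if_false, ih]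
      rw [decide_eq_decide]
      constructor
      · rintro ⟨k', hk', hgk'⟩; exact ⟨k', List.mem_cons_of_mem _ hk', hgk'⟩
      · rintro ⟨k', hk', hgk'⟩
        rcases List.mem_cons.mp hk' with rfl | hmem
        · rw [hg] at hgk'; exact absurd hgk' (by simp)
        · exact ⟨k', hmem, hgk'⟩
    · simp only [if_true]
      show true = _
      symm
      rw [decide_eq_true_iff]
      exact ⟨k, List.mem_cons_self, hg⟩

lemma cost_orTree {h w : ℕ} (Tg : DTree w) (ks : List (Fin h))
    (x : Fin (h * w) → Bool) :
    (orTree Tg ks).cost x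
      ≤ (ks.map fun k => Tg.cost (fun j => x (blockIdx h w k j))).sum := by
  induction ks with
  | nil => simp [orTree, cost]
  | cons k ks ih =>
    show (graft (emap (blockIdx h w k) Tg) _).cost x ≤ _
    rw [cost_graft, cost_emap, eval_emap]
    simp only [List.map_cons, List.sum_cons]
    have hrest : (if Tg.eval (fun j => x (blockIdx h w k j)) then leaf true
        else orTree Tg ks).cost x
        ≤ (ks.map fun k => Tg.cost (fun j => x (blockIdx h w k j))).sum := by
      cases Tg.eval (fun j => x (blockIdx h w k j))
      · simpa using ih
      · simp [cost]
    omega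

end DTree

lemma avgCost_nonneg {n : ℕ} (T : DTree n) : 0 ≤ avgCost T := by
  unfold avgCost
  apply div_nonneg
  · exact Finset.sum_nonneg fun x _ => by positivity
  · positivity

lemma cost_lb (h w : ℕ) (g : (Fin w → Bool) → Bool) (d : ℕ)
    (hd : ∀ y : Fin w → Bool, d ≤ certC g y)
    (T : DTree (h * w))
    (hT : Computes T (fun x : Fin (h * w) → Bool =>
      decide (∃ k : Fin h, g (fun j : Fin w => x (blockIdx h w k j)) = true)))
    (x : Fin (h * w) → Bool)
    (hx : ∀ k : Fin h, g (fun j => x (blockIdx h w k j)) = false) :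
    h * d ≤ T.cost x := by
  classical
  have hT' : ∀ z : Fin (h * w) → Bool, T.eval z
      = decide (∃ k : Fin h, g (fun j : Fin w => z (blockIdx h w k j)) = true) :=
    fun z => hT z
  set S : Fin h → Finset (Fin w) :=
    fun k => Finset.univ.filter fun j => blockIdx h w k j ∈ T.queries x with hS
  have hcert : ∀ k, IsCert g (fun j => x (blockIdx h w k j)) (S k) := by
    intro k y hy
    set x' : Fin (h * w) → Bool := fun i =>
      if (finProdFinEquiv.symm i).1 = k then y (finProdFinEquiv.symm i).2 else x i
      with hx'def
    have hsymm : ∀ (k' : Fin h) (j : Fin w),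
        finProdFinEquiv.symm (blockIdx h w k' j) = (k', j) := by
      intro k' j; rw [blockIdx_eq]; exact Equiv.symm_apply_apply _ _
    have hbk : (fun j => x' (blockIdx h w k j)) = y := by
      funext j
      show (if (finProdFinEquiv.symm (blockIdx h w k j)).1 = k
        then y (finProdFinEquiv.symm (blockIdx h w k j)).2
        else x (blockIdx h w k j)) = y j
      rw [hsymm]
      simp
    have hagree : ∀ i ∈ T.queries x, x' i = x i := by
      intro i hi
      by_cases hik : (finProdFinEquiv.symm i).1 = k
      · have hi2 : i = blockIdx h w k (finProdFinEquiv.symm i).2 := by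
          rw [blockIdx_eq, ← hik]
          exact (Equiv.apply_symm_apply finProdFinEquiv i).symm
        have hj : (finProdFinEquiv.symm i).2 ∈ S k := by
          rw [hS]
          simp only [Finset.mem_filter, Finset.mem_univ, true_and]
          rw [← hi2]; exact hi
        have hyx := hy _ hj
        have hxi' : x' i = y (finProdFinEquiv.symm i).2 := by
          show (if (finProdFinEquiv.symm i).1 = k
            then y (finProdFinEquiv.symm i).2 else x i) = _
          rw [if_pos hik]
        rw [hxi', hyx]
        show x (blockIdx h w k (finProdFinEquiv.symm i).2) = x i
        rw [← hi2]
      · show (if (finProdFinEquiv.symm i).1 = k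
          then y (finProdFinEquiv.symm i).2 else x i) = x i
        rw [if_neg hik]
    have heval : T.eval x' = T.eval x := DTree.eval_agree T x x' hagree
    have hfx : (decide (∃ k' : Fin h,
        g (fun j => x (blockIdx h w k' j)) = true)) = false := by
      simp only [decide_eq_false_iff_not]
      rintro ⟨k', hk'⟩
      rw [hx k'] at hk'
      exact absurd hk' (by simp)
    have hfx' : (decide (∃ k' : Fin h,
        g (fun j => x' (blockIdx h w k' j)) = true)) = false := by
      rw [← hT' x', heval, hT' x, hfx]
    have hgy : g y = false := by
      by_contra hcon
      have : (decide (∃ k' : Fin h,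
          g (fun j => x' (blockIdx h w k' j)) = true)) = true := by
        rw [decide_eq_true_iff]
        exact ⟨k, by rw [hbk]; exact eq_true_of_ne_false hcon⟩
      rw [hfx'] at this
      exact absurd this (by simp)
    rw [hgy, hx k]
  have hdS : ∀ k, d ≤ (S k).card := fun k =>
    le_trans (hd _) (Nat.sInf_le ⟨S k, hcert k, rfl⟩)
  set B : Fin h → Finset (Fin (h * w)) := fun k => (S k).image (blockIdx h w k)
    with hB
  have hBcard : ∀ k, (B k).card = (S k).card := fun k =>
    Finset.card_image_of_injective _ (blockIdx_injective h w k)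
  have hdisj : ∀ k ∈ (Finset.univ : Finset (Fin h)), ∀ k' ∈ Finset.univ,
      k ≠ k' → Disjoint (B k) (B k') := by
    intro k _ k' _ hkk'
    rw [Finset.disjoint_left]
    intro a ha ha'
    obtain ⟨j, _, rfl⟩ := Finset.mem_image.mp ha
    obtain ⟨j', _, he⟩ := Finset.mem_image.mp ha'
    exact hkk' (blockIdx_fst he.symm)
  have hsub : (Finset.univ.biUnion B) ⊆ T.queries x := by
    intro a ha
    obtain ⟨k, _, hk⟩ := Finset.mem_biUnion.mp ha
    obtain ⟨j, hj, rfl⟩ := Finset.mem_image.mp hk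
    exact (Finset.mem_filter.mp hj).2
  calc h * d = ∑ _k : Fin h, d := by
        simp [Finset.sum_const, Finset.card_univ, mul_comm]
    _ ≤ ∑ k : Fin h, (S k).card := Finset.sum_le_sum fun k _ => hdS k
    _ = ∑ k : Fin h, (B k).card := by simp [hBcard]
    _ = (Finset.univ.biUnion B).card := (Finset.card_biUnion hdisj).symm
    _ ≤ (T.queries x).card := Finset.card_le_card hsub
    _ ≤ T.cost x := DTree.card_queries_le_cost T x

set_option maxHeartbeats 2000000 in
theorem stmt17 (w h : ℕ) (g : (Fin w → Bool) → Bool) (p : ℝ)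
    (hp : p = (wt g : ℝ) / 2 ^ w) (d : ℕ)
    (hd : d = sInf {k : ℕ | ∃ y : Fin w → Bool, certC g y = k}) :
    ((h * d : ℕ) : ℝ) * (1 - p) ^ h ≤
      Dave (fun x : Fin (h * w) → Bool =>
        decide (∃ k : Fin h, g (fun j : Fin w => x (blockIdx h w k j)) = true)) ∧
    Dave (fun x : Fin (h * w) → Bool =>
        decide (∃ k : Fin h, g (fun j : Fin w => x (blockIdx h w k j)) = true)) ≤
      h * Dave g := by
  classical
  set f : (Fin (h * w) → Bool) → Bool := fun x =>
    decide (∃ k : Fin h, g (fun j : Fin w => x (blockIdx h w k j)) = true) with hf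
  have hSf_ne : {c : ℝ | ∃ T : DTree (h * w), Computes T f ∧ avgCost T = c}.Nonempty := by
    obtain ⟨T, hT⟩ := exists_computes' f
    exact ⟨avgCost T, T, hT, rfl⟩
  have hSf_bdd : BddBelow {c : ℝ | ∃ T : DTree (h * w), Computes T f ∧ avgCost T = c} := by
    refine ⟨0, ?_⟩
    rintro c ⟨T, _, rfl⟩
    exact avgCost_nonneg T
  have hwt : wt g ≤ 2 ^ w := by
    have := Finset.card_filter_le (Finset.univ : Finset (Fin w → Bool))
      (fun y => g y = true)
    simpa [wt, Finset.card_univ] using this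
  constructor
  · -- lower bound
    apply le_csInf hSf_ne
    rintro c ⟨T, hT, rfl⟩
    have hdmin : ∀ y : Fin w → Bool, d ≤ certC g y := by
      intro y
      rw [hd]
      exact Nat.sInf_le ⟨y, rfl⟩
    set P : (Fin (h * w) → Bool) → Prop :=
      fun x => ∀ k : Fin h, g (fun j => x (blockIdx h w k j)) = false with hP
    have hNcard : (Finset.univ.filter P).card = (2 ^ w - wt g) ^ h := by
      rw [← card_allfalse h w g, Fintype.card_subtype]
    have hkey : ∀ x ∈ Finset.univ.filter P, ((h * d : ℕ) : ℝ) ≤ (T.cost x : ℝ) := by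
      intro x hxP
      exact_mod_cast Nat.cast_le.mpr
        (cost_lb h w g d hdmin T hT x (Finset.mem_filter.mp hxP).2)
    have hsum1 : ((Finset.univ.filter P).card : ℝ) * ((h * d : ℕ) : ℝ)
        ≤ ∑ x ∈ Finset.univ.filter P, (T.cost x : ℝ) := by
      have := Finset.card_nsmul_le_sum (Finset.univ.filter P)
        (fun x => (T.cost x : ℝ)) (((h * d : ℕ) : ℝ)) hkey
      simpa [nsmul_eq_mul] using this
    have hsum2 : ∑ x ∈ Finset.univ.filter P, (T.cost x : ℝ)
        ≤ ∑ x : Fin (h * w) → Bool, (T.cost x : ℝ) := by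
      apply Finset.sum_le_sum_of_subset_of_nonneg (Finset.filter_subset _ _)
      intro x _ _
      positivity
    have hpow : (0:ℝ) < 2 ^ (h * w) := by positivity
    have h2w : ((2:ℝ)) ^ (h * w) = ((2:ℝ) ^ w) ^ h := by
      rw [← pow_mul, Nat.mul_comm]
    have hp1 : (1 - p) = ((2 ^ w - wt g : ℕ) : ℝ) / 2 ^ w := by
      rw [hp, Nat.cast_sub hwt]
      push_cast
      field_simp
    have hb : ((h * d : ℕ) : ℝ) * (1 - p) ^ h
        = (((2 ^ w - wt g) ^ h : ℕ) : ℝ) * ((h * d : ℕ) : ℝ) / 2 ^ (h * w) := by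
      rw [hp1, div_pow, h2w]
      push_cast
      ring
    rw [hb]
    have hN : ((Finset.univ.filter P).card : ℝ) = (((2 ^ w - wt g) ^ h : ℕ) : ℝ) := by
      exact_mod_cast congrArg (Nat.cast : ℕ → ℝ) hNcard
    have hfinal : (((2 ^ w - wt g) ^ h : ℕ) : ℝ) * ((h * d : ℕ) : ℝ)
        ≤ ∑ x : Fin (h * w) → Bool, (T.cost x : ℝ) := by
      rw [← hN]
      exact hsum1.trans hsum2
    show _ ≤ avgCost T
    unfold avgCost
    gcongr
  · -- upper bound
    have hSg_ne : {c : ℝ | ∃ T : DTree w, Computes T g ∧ avgCost T = c}.Nonempty := by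
      obtain ⟨T, hT⟩ := exists_computes' g
      exact ⟨avgCost T, T, hT, rfl⟩
    have hkey : ∀ Tg : DTree w, Computes Tg g → Dave f ≤ h * avgCost Tg := by
      intro Tg hTg
      set Tf : DTree (h * w) := DTree.orTree Tg (List.finRange h) with hTf
      have hTfc : Computes Tf f := by
        intro x
        rw [hTf, DTree.eval_orTree g Tg hTg, hf]
        rw [decide_eq_decide]
        constructor
        · rintro ⟨k, _, hk⟩; exact ⟨k, hk⟩
        · rintro ⟨k, hk⟩; exact ⟨k, List.mem_finRange k, hk⟩
      have hcost : ∀ x : Fin (h * w) → Bool,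
          ((Tf.cost x : ℝ)) ≤ ∑ k : Fin h, (Tg.cost (fun j => x (blockIdx h w k j)) : ℝ) := by
        intro x
        have h1 := DTree.cost_orTree Tg (List.finRange h) x
        have h2 : ∑ k : Fin h, Tg.cost (fun j => x (blockIdx h w k j))
            = ((List.finRange h).map fun k => Tg.cost (fun j => x (blockIdx h w k j))).sum :=
          Fin.sum_univ_def _
        rw [← hTf] at h1
        have h3 : Tf.cost x ≤ ∑ k : Fin h, Tg.cost (fun j => x (blockIdx h w k j)) := by
          omega
        exact_mod_cast h3
      have havg : avgCost Tf ≤ h * avgCost Tg := by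
        unfold avgCost
        calc (∑ x : Fin (h * w) → Bool, (Tf.cost x : ℝ)) / 2 ^ (h * w)
            ≤ (∑ x : Fin (h * w) → Bool,
                ∑ k : Fin h, (Tg.cost (fun j => x (blockIdx h w k j)) : ℝ)) / 2 ^ (h * w) := by
              gcongr with x
              exact hcost x
          _ = ∑ k : Fin h, (∑ x : Fin (h * w) → Bool,
                (Tg.cost (fun j => x (blockIdx h w k j)) : ℝ)) / 2 ^ (h * w) := by
              rw [Finset.sum_comm, Finset.sum_div]
          _ = ∑ _k : Fin h, (∑ y : Fin w → Bool, (Tg.cost y : ℝ)) / 2 ^ w :=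
              Finset.sum_congr rfl fun k _ => sum_block_div (w := w) k (fun y => (Tg.cost y : ℝ))
          _ = h * ((∑ y : Fin w → Bool, (Tg.cost y : ℝ)) / 2 ^ w) := by
              simp [Finset.sum_const, Finset.card_univ, nsmul_eq_mul]
      exact (csInf_le hSf_bdd ⟨Tf, hTfc, rfl⟩).trans havg
    rcases Nat.eq_zero_or_pos h with h0 | hpos
    · subst h0
      obtain ⟨c, Tg, hTg, rfl⟩ := hSg_ne
      have := hkey Tg hTg
      simpa using this
    · have hhr : (0:ℝ) < h := by exact_mod_cast hpos
      have hdiv : Dave f / h ≤ Dave g := by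
        apply le_csInf hSg_ne
        rintro c ⟨Tg, hTg, rfl⟩
        rw [div_le_iff₀ hhr]
        exact le_of_le_of_eq (hkey Tg hTg) (mul_comm _ _)
      calc Dave f ≤ (Dave f / h) * h := by rw [div_mul_cancel₀]; exact ne_of_gt hhr
        _ ≤ Dave g * h := by
            apply mul_le_mul_of_nonneg_right hdiv (le_of_lt hhr)
        _ = h * Dave g := mul_comm _ _
end

section
/- Let S_m = X_1 + ⋯ + X_m where (X_1,…,X_m) are obtained by sampling m items without replacement from an urn containing N zeros and N ones (m ≤ 2N). Then for any t > 0, Pr[|S_m − m/2| ≥ t] ≤ 2 exp(−2t²/m). -/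
section Aux
open Polynomial Finset


lemma coeff_mul_nonneg {p q : ℝ[X]} (hp : ∀ k, 0 ≤ p.coeff k) (hq : ∀ k, 0 ≤ q.coeff k) (k : ℕ) :
    0 ≤ (p * q).coeff k := by
  rw [Polynomial.coeff_mul]
  exact Finset.sum_nonneg fun x _ => mul_nonneg (hp _) (hq _)

lemma coeff_pow_nonneg {p : ℝ[X]} (hp : ∀ k, 0 ≤ p.coeff k) (n k : ℕ) :
    0 ≤ (p ^ n).coeff k := by
  induction n generalizing k with
  | zero => simp [Polynomial.coeff_one]; positivity
  | succ n ih => rw [pow_succ]; exact coeff_mul_nonneg ih hp k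

lemma coeff_trinomial_mono {a b b' : ℝ} (ha : 0 ≤ a) (hb : 0 ≤ b) (hbb : b ≤ b') (n k : ℕ) :
    ((X ^ 2 + C a * X + C b) ^ n).coeff k ≤ ((X ^ 2 + C a * X + C b') ^ n).coeff k := by
  have key : ∀ c : ℝ, ((X ^ 2 + C a * X + C c) ^ n).coeff k
      = ∑ j ∈ Finset.range (n + 1),
        ((X ^ 2 + C a * X) ^ j).coeff k * c ^ (n - j) * (n.choose j : ℝ) := by
    intro c
    rw [add_pow, Polynomial.finset_sum_coeff]
    refine Finset.sum_congr rfl fun j _ => ?_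
    rw [← Polynomial.C_pow, ← Polynomial.C_eq_natCast, Polynomial.coeff_mul_C,
      Polynomial.coeff_mul_C]
  rw [key, key]
  refine Finset.sum_le_sum fun j _ => ?_
  have hcoeff : 0 ≤ ((X ^ 2 + C a * X) ^ j).coeff k := by
    refine coeff_pow_nonneg (fun k => ?_) j k
    rcases k with _ | _ | _ | k <;>
      simp [Polynomial.coeff_add, Polynomial.coeff_X_pow, Polynomial.coeff_C_mul, ha,
        Polynomial.coeff_X]
  have hbp : b ^ (n - j) ≤ b' ^ (n - j) := pow_le_pow_left₀ hb hbb (n - j)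
  exact mul_le_mul_of_nonneg_right (mul_le_mul_of_nonneg_left hbp hcoeff)
    (Nat.cast_nonneg _)

lemma sum_pow_inter_le (N m : ℕ) (hm : m ≤ 2 * N) (T : Finset (Fin (2 * N)))
    (hT : T.card = N) (x : ℝ) (hx : 0 ≤ x) :
    ∑ A ∈ (Finset.univ : Finset (Fin (2 * N))).powersetCard m, x ^ (A ∩ T).card
      ≤ ((2 * N).choose m : ℝ) * ((1 + x) / 2) ^ m := by
  set c : Fin (2 * N) → ℝ := fun i => if i ∈ T then x else 1 with hc
  have hcard : (Finset.univ : Finset (Fin (2 * N))).card = 2 * N := by simp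
  have hk : 2 * N - m ≤ (Finset.univ : Finset (Fin (2 * N))).card := by omega
  have hmm : (Finset.univ : Finset (Fin (2 * N))).card - (2 * N - m) = m := by omega
  have h1 : ∑ A ∈ (Finset.univ : Finset (Fin (2 * N))).powersetCard m, x ^ (A ∩ T).card
      = ((∏ i : Fin (2 * N), (X + C (c i)))).coeff (2 * N - m) := by
    rw [Finset.prod_X_add_C_coeff _ c hk, hmm]
    refine Finset.sum_congr rfl fun A _ => ?_
    rw [← Finset.prod_filter_mul_prod_filter_not A (· ∈ T)]
    have e1 : ∏ i ∈ A.filter (· ∈ T), c i = x ^ (A ∩ T).card := by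
      rw [← Finset.filter_mem_eq_inter]
      rw [Finset.prod_congr rfl (fun i hi => ?_), Finset.prod_const]
      simp only [Finset.mem_filter] at hi
      simp [hc, hi.2]
    have e2 : ∏ i ∈ A.filter (¬ · ∈ T), c i = 1 := by
      refine Finset.prod_eq_one fun i hi => ?_
      simp only [Finset.mem_filter] at hi
      simp [hc, hi.2]
    rw [e1, e2, mul_one]
  have h2 : ∏ i : Fin (2 * N), (X + C (c i)) = (X ^ 2 + C (1 + x) * X + C x) ^ N := by
    rw [← Finset.prod_mul_prod_compl T fun i => X + C (c i)]
    have e1 : ∏ i ∈ T, (X + C (c i)) = (X + C x) ^ N := by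
      have h' : ∏ i ∈ T, (X + C (c i)) = ∏ i ∈ T, (X + C x) :=
        Finset.prod_congr rfl (fun i hi => by simp [hc, hi])
      rw [h', Finset.prod_const, hT]
    have e2 : ∏ i ∈ Tᶜ, (X + C (c i)) = (X + C 1) ^ N := by
      have h' : ∏ i ∈ Tᶜ, (X + C (c i)) = ∏ i ∈ Tᶜ, (X + C 1) := by
        refine Finset.prod_congr rfl (fun i hi => ?_)
        simp only [Finset.mem_compl] at hi; simp [hc, hi]
      rw [h', Finset.prod_const, Finset.card_compl, hT, Fintype.card_fin]
      congr 1; omega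
    rw [e1, e2, ← mul_pow]
    congr 1
    rw [C_add, C_1]
    ring
  have h3 : ((2 * N).choose m : ℝ) * ((1 + x) / 2) ^ m
      = ((X ^ 2 + C (1 + x) * X + C (((1 + x) / 2) ^ 2)) ^ N).coeff (2 * N - m) := by
    have e0 : (X ^ 2 + C (1 + x) * X + C (((1 + x) / 2) ^ 2)) ^ N
        = ∏ i : Fin (2 * N), (X + C ((1 + x) / 2)) := by
      rw [Finset.prod_const, hcard, pow_mul]
      congr 1
      have hC : C ((1 : ℝ) + x) = C ((1 + x) / 2) + C ((1 + x) / 2) := by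
        rw [← C_add]; congr 1; ring
      rw [C_pow, hC]
      ring
    rw [e0, Finset.prod_X_add_C_coeff _ _ hk, hmm]
    rw [Finset.sum_congr rfl (fun A hA => (Finset.prod_const _).trans
      (by rw [(Finset.mem_powersetCard.mp hA).2])), Finset.sum_const, nsmul_eq_mul,
      Finset.card_powersetCard, hcard]
  rw [h1, h2, h3]
  refine coeff_trinomial_mono (by linarith) hx ?_ N (2 * N - m)
  nlinarith [sq_nonneg (1 - x)]


open scoped Classical in
lemma fiber_card {n m : ℕ} (A : Finset (Fin n)) (hA : A.card = m) :
    (Finset.univ.filter fun σ : Fin m ↪ Fin n => Finset.univ.map σ = A).card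
      = m.factorial := by
  have e : {σ : Fin m ↪ Fin n // Finset.univ.map σ = A} ≃ (Fin m ↪ {x // x ∈ A}) :=
    { toFun := fun σh =>
        ⟨fun k => ⟨σh.1 k, by have := Finset.mem_map_of_mem σh.1 (Finset.mem_univ k); rwa [σh.2] at this⟩,
          fun a b hab => σh.1.injective (by simpa [Subtype.ext_iff] using hab)⟩
      invFun := fun τ => ⟨τ.trans (Function.Embedding.subtype _), by
        refine Finset.eq_of_subset_of_card_le (fun a ha => ?_) ?_
        · obtain ⟨k, _, rfl⟩ := Finset.mem_map.mp ha
          exact (τ k).2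
        · rw [Finset.card_map, hA, Finset.card_univ, Fintype.card_fin]⟩
      left_inv := fun σh => by ext k; rfl
      right_inv := fun τ => by ext k; rfl }
  rw [← Fintype.card_subtype, Fintype.card_congr e, Fintype.card_embedding_eq,
    Fintype.card_coe, hA, Fintype.card_fin, Nat.descFactorial_self]

open scoped Classical in
lemma filter_card_eq {n m : ℕ} (P : Finset (Fin n) → Prop) :
    (Finset.univ.filter fun σ : Fin m ↪ Fin n => P (Finset.univ.map σ)).card
      = m.factorial
        * (((Finset.univ : Finset (Fin n)).powersetCard m).filter P).card := by
  rw [Finset.card_eq_sum_card_fiberwise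
    (f := fun σ : Fin m ↪ Fin n => Finset.univ.map σ)
    (t := ((Finset.univ : Finset (Fin n)).powersetCard m).filter P)
    (fun σ hσ => by
      simp only [Finset.mem_coe, Finset.mem_filter] at hσ ⊢
      refine ⟨Finset.mem_powersetCard.mpr ⟨Finset.subset_univ _, ?_⟩, hσ.2⟩
      rw [Finset.card_map, Finset.card_univ, Fintype.card_fin])]
  rw [Finset.sum_congr rfl (fun A hA => ?_), Finset.sum_const, smul_eq_mul, mul_comm]
  simp only [Finset.mem_filter, Finset.mem_powersetCard] at hA
  rw [Finset.filter_filter]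
  have : ∀ σ : Fin m ↪ Fin n,
      (P (Finset.univ.map σ) ∧ Finset.univ.map σ = A) ↔ Finset.univ.map σ = A := by
    intro σ
    constructor
    · exact And.right
    · intro h; exact ⟨h ▸ hA.2, h⟩
  rw [Finset.filter_congr fun σ _ => this σ, fiber_card A hA.1.2]

end Aux

set_option maxHeartbeats 1000000 in
open scoped Classical in
theorem stmt18 (N m : ℕ) (hm : m ≤ 2 * N) (t : ℝ) (ht : 0 < t) :
    (((Finset.univ.filter fun σ : Fin m ↪ Fin (2 * N) =>
        t ≤ |((Finset.univ.filter fun k : Fin m => N ≤ (σ k).val).card : ℝ) - m / 2|).card : ℝ))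
      / ((Finset.univ : Finset (Fin m ↪ Fin (2 * N))).card : ℝ)
    ≤ 2 * Real.exp (-2 * t ^ 2 / m) := by
  have hexp_pos := Real.exp_pos (-2 * t ^ 2 / m)
  by_cases hm0 : m = 0
  · subst hm0
    have he : (Finset.univ.filter fun σ : Fin 0 ↪ Fin (2 * N) =>
        t ≤ |((Finset.univ.filter fun k : Fin 0 => N ≤ (σ k).val).card : ℝ) - (0:ℕ) / 2|)
        = ∅ := by
      ext σ
      simp only [Finset.mem_filter, Finset.mem_univ, true_and, Finset.notMem_empty,
        iff_false, not_le]
      have : (Finset.univ : Finset (Fin 0)) = ∅ := rfl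
      simp [this]
      linarith
    rw [he]
    simp only [Finset.card_empty, Nat.cast_zero, zero_div]
    positivity
  -- main case
  have hm1 : 1 ≤ m := Nat.one_le_iff_ne_zero.mpr hm0
  have hN1 : 1 ≤ N := by omega
  set T : Finset (Fin (2 * N)) := Finset.univ.filter (fun i => N ≤ i.val) with hTdef
  have hTcard : T.card = N := by
    have : T = Finset.Ici (⟨N, by omega⟩ : Fin (2 * N)) := by
      ext i
      simp [hTdef, Fin.le_def]
    rw [this, Fin.card_Ici]
    show 2 * N - N = N
    omega
  have hTccard : Tᶜ.card = N := by
    rw [Finset.card_compl, hTcard, Fintype.card_fin]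
    omega
  set P : Finset (Fin (2 * N)) → Prop := fun A => t ≤ |((A ∩ T).card : ℝ) - m / 2| with hP
  -- rewrite the numerator
  have hcount : ∀ σ : Fin m ↪ Fin (2 * N),
      (Finset.univ.filter fun k : Fin m => N ≤ (σ k).val).card
        = ((Finset.univ.map σ) ∩ T).card := by
    intro σ
    rw [← Finset.card_map σ]
    congr 1
    ext a
    simp only [Finset.mem_map, Finset.mem_inter, Finset.mem_filter, Finset.mem_univ, true_and,
      hTdef]
    constructor
    · rintro ⟨k, hk, rfl⟩; exact ⟨⟨k, rfl⟩, hk⟩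
    · rintro ⟨⟨k, rfl⟩, ha⟩; exact ⟨k, ha, rfl⟩
  have hnum : (Finset.univ.filter fun σ : Fin m ↪ Fin (2 * N) =>
        t ≤ |((Finset.univ.filter fun k : Fin m => N ≤ (σ k).val).card : ℝ) - m / 2|)
      = Finset.univ.filter fun σ : Fin m ↪ Fin (2 * N) => P (Finset.univ.map σ) := by
    refine Finset.filter_congr fun σ _ => ?_
    rw [hP, hcount σ]
  set bad := ((Finset.univ : Finset (Fin (2 * N))).powersetCard m).filter P with hbad
  have hnum2 : (Finset.univ.filter fun σ : Fin m ↪ Fin (2 * N) =>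
        t ≤ |((Finset.univ.filter fun k : Fin m => N ≤ (σ k).val).card : ℝ) - m / 2|).card
      = m.factorial * bad.card := by
    rw [hnum, filter_card_eq P]
  have hden : (Finset.univ : Finset (Fin m ↪ Fin (2 * N))).card
      = m.factorial * (2 * N).choose m := by
    have h1 := filter_card_eq (n := 2 * N) (m := m) (fun _ => True)
    simpa [Finset.filter_true, Finset.card_powersetCard] using h1
  rw [hnum2, hden]
  have hK1 : (1 : ℝ) ≤ ((2 * N).choose m : ℝ) := Nat.one_le_cast.mpr (Nat.choose_pos hm)
  set K := (2 * N).choose m with hKdef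
  have hKpos : (0 : ℝ) < (K : ℝ) := by linarith
  have hfac : (0 : ℝ) < (m.factorial : ℝ) := by exact_mod_cast m.factorial_pos
  have hmpos : (0 : ℝ) < (m : ℝ) := by exact_mod_cast hm1
  set lam := 4 * t / m with hlam
  have hlam_pos : 0 < lam := by positivity
  set x := Real.exp lam with hx
  have hx0 : (0 : ℝ) ≤ x := (Real.exp_pos _).le
  have hxpow : ∀ n : ℕ, Real.exp (lam * n) = x ^ n := by
    intro n; rw [mul_comm, Real.exp_nat_mul]
  set pc := ((Finset.univ : Finset (Fin (2 * N))).powersetCard m) with hpc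
  have hcardsplit : ∀ A ∈ pc, ((A ∩ T).card : ℝ) + ((A ∩ Tᶜ).card : ℝ) = m := by
    intro A hA
    have h1 : (A.filter (· ∈ T)).card + (A.filter fun i => ¬ i ∈ T).card = A.card :=
      Finset.card_filter_add_card_filter_not _
    have e1 : A.filter (· ∈ T) = A ∩ T := Finset.filter_mem_eq_inter
    have e2 : (A.filter fun i => ¬ i ∈ T) = A ∩ Tᶜ := by
      ext i; simp [Finset.mem_filter, Finset.mem_inter]
    rw [e1, e2] at h1
    rw [(Finset.mem_powersetCard.mp hA).2] at h1
    exact_mod_cast congrArg (Nat.cast (R := ℝ)) h1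
  set E := Real.exp (lam * (-(m / 2) - t)) with hE
  have hEpos : 0 < E := Real.exp_pos _
  have key : (bad.card : ℝ) ≤ (K : ℝ) * (2 * Real.exp (-2 * t ^ 2 / m)) := by
    have hpoint : ∀ A ∈ bad,
        (1 : ℝ) ≤ Real.exp (lam * (((A ∩ T).card : ℝ) - m / 2 - t))
              + Real.exp (lam * (m / 2 - ((A ∩ T).card : ℝ) - t)) := by
      intro A hA
      obtain ⟨-, hPA⟩ := Finset.mem_filter.mp hA
      rw [hP] at hPA
      have hp1 := (Real.exp_pos (lam * (((A ∩ T).card : ℝ) - m / 2 - t))).le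
      have hp2 := (Real.exp_pos (lam * (m / 2 - ((A ∩ T).card : ℝ) - t))).le
      rcases le_abs.mp hPA with h | h
      · have h1 : (1:ℝ) ≤ Real.exp (lam * (((A ∩ T).card : ℝ) - m / 2 - t)) :=
          Real.one_le_exp (by nlinarith)
        linarith
      · have h1 : (1:ℝ) ≤ Real.exp (lam * (m / 2 - ((A ∩ T).card : ℝ) - t)) :=
          Real.one_le_exp (by nlinarith)
        linarith
    have step1 : (bad.card : ℝ)
        ≤ ∑ A ∈ pc, (Real.exp (lam * (((A ∩ T).card : ℝ) - m / 2 - t))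
              + Real.exp (lam * (m / 2 - ((A ∩ T).card : ℝ) - t))) := by
      calc (bad.card : ℝ) = ∑ _A ∈ bad, (1 : ℝ) := by simp
        _ ≤ ∑ A ∈ bad, (Real.exp (lam * (((A ∩ T).card : ℝ) - m / 2 - t))
              + Real.exp (lam * (m / 2 - ((A ∩ T).card : ℝ) - t))) :=
            Finset.sum_le_sum hpoint
        _ ≤ _ := Finset.sum_le_sum_of_subset_of_nonneg (Finset.filter_subset _ _)
            (fun A _ _ => by positivity)
    have step2 : ∀ A ∈ pc, Real.exp (lam * (((A ∩ T).card : ℝ) - m / 2 - t))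
              + Real.exp (lam * (m / 2 - ((A ∩ T).card : ℝ) - t))
        = x ^ (A ∩ T).card * E + x ^ (A ∩ Tᶜ).card * E := by
      intro A hA
      have e1 : Real.exp (lam * (((A ∩ T).card : ℝ) - m / 2 - t))
          = x ^ (A ∩ T).card * E := by
        rw [← hxpow, hE, ← Real.exp_add]; congr 1; ring
      have e2 : Real.exp (lam * (m / 2 - ((A ∩ T).card : ℝ) - t))
          = x ^ (A ∩ Tᶜ).card * E := by
        rw [← hxpow, hE, ← Real.exp_add]
        congr 1
        have := hcardsplit A hA
        nlinarith [this]
      rw [e1, e2]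
    have step3 : ∑ A ∈ pc, (Real.exp (lam * (((A ∩ T).card : ℝ) - m / 2 - t))
              + Real.exp (lam * (m / 2 - ((A ∩ T).card : ℝ) - t)))
        = (∑ A ∈ pc, x ^ (A ∩ T).card) * E + (∑ A ∈ pc, x ^ (A ∩ Tᶜ).card) * E := by
      rw [Finset.sum_congr rfl step2, Finset.sum_add_distrib, Finset.sum_mul, Finset.sum_mul]
    have hS1 := sum_pow_inter_le N m hm T hTcard x hx0
    have hS2 := sum_pow_inter_le N m hm Tᶜ hTccard x hx0
    have step4 : ((1 + x) / 2) ^ m * E ≤ Real.exp (-2 * t ^ 2 / m) := by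
      have hEsplit : E = Real.exp ((m : ℝ) * (-(lam / 2))) * Real.exp (-(lam * t)) := by
        rw [hE, ← Real.exp_add]; congr 1; ring
      have hcosh : ((1 + x) / 2) * Real.exp (-(lam / 2)) = Real.cosh (lam / 2) := by
        have hu : x = Real.exp (lam / 2) * Real.exp (lam / 2) := by
          rw [hx, ← Real.exp_add]; congr 1; ring
        have hupos : 0 < Real.exp (lam / 2) := Real.exp_pos _
        rw [Real.cosh_eq, Real.exp_neg, hu]
        field_simp
        ring
      have h1 : ((1 + x) / 2) ^ m * E
          = (((1 + x) / 2) * Real.exp (-(lam / 2))) ^ m * Real.exp (-(lam * t)) := by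
        rw [hEsplit, Real.exp_nat_mul, mul_pow]; ring
      rw [h1, hcosh]
      have h2 : Real.cosh (lam / 2) ^ m ≤ Real.exp ((lam / 2) ^ 2 / 2) ^ m :=
        pow_le_pow_left₀ ((Real.cosh_pos _).le) (Real.cosh_le_exp_half_sq _) m
      have h3 : Real.exp ((lam / 2) ^ 2 / 2) ^ m * Real.exp (-(lam * t))
          = Real.exp (-2 * t ^ 2 / m) := by
        rw [← Real.exp_nat_mul, ← Real.exp_add]
        congr 1
        rw [hlam]
        field_simp
        ring
      calc Real.cosh (lam / 2) ^ m * Real.exp (-(lam * t))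
          ≤ Real.exp ((lam / 2) ^ 2 / 2) ^ m * Real.exp (-(lam * t)) := by
            exact mul_le_mul_of_nonneg_right h2 (Real.exp_pos _).le
        _ = Real.exp (-2 * t ^ 2 / m) := h3
    calc (bad.card : ℝ) ≤ (∑ A ∈ pc, x ^ (A ∩ T).card) * E
          + (∑ A ∈ pc, x ^ (A ∩ Tᶜ).card) * E := by rw [← step3]; exact step1
      _ ≤ ((K : ℝ) * ((1 + x) / 2) ^ m) * E + ((K : ℝ) * ((1 + x) / 2) ^ m) * E := by
          have := mul_le_mul_of_nonneg_right hS1 hEpos.le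
          have := mul_le_mul_of_nonneg_right hS2 hEpos.le
          gcongr
      _ = (K : ℝ) * (2 * (((1 + x) / 2) ^ m * E)) := by ring
      _ ≤ (K : ℝ) * (2 * Real.exp (-2 * t ^ 2 / m)) := by
          have := step4
          gcongr
  push_cast
  rw [mul_div_mul_left _ _ (ne_of_gt hfac), div_le_iff₀ hKpos]
  calc (bad.card : ℝ) ≤ (K : ℝ) * (2 * Real.exp (-2 * t ^ 2 / m)) := key
    _ = 2 * Real.exp (-2 * t ^ 2 / m) * K := by ring
end
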